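/- Fix a real number a with 0 < a < 1, a constant 0 < C < 1, an integer t ≥ 1, and ε' with 0 < ε' < 1 − P(t), and for each n let k(n) be any integer with k(n) ≥ (10t + n²t − nt + n + log₂(1/ε')) / log₂(1/(1+(C−1)a)). Then the quantity η(n) = (P(t) + ε')/(1 − a^{k(n)})^{n−1} + (1 − (1 − a^{k(n)})^{n−1})/(1 − a^{k(n)})^{n−1} converges to P(t) + ε' as n → ∞. -/

import Mathlib

open MeasureTheory Matrix
open scoped Classical ComplexOrder

noncomputable section

/-- The spectral-gap bound
`P(t) = (1 + (1/2)·(425·⌊log₂(4t)⌋²·t⁵·t^{3.1/ln 2})⁻¹)^{-1/3}`. -/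
def Pgap (t : ℕ) : ℝ :=
  (1 + (1 / 2) * (425 * ((⌊Real.logb 2 (4 * t)⌋ : ℤ) : ℝ) ^ 2 * (t : ℝ) ^ 5 *
      (t : ℝ) ^ ((3.1 : ℝ) / Real.log 2))⁻¹) ^ (-(1 / 3 : ℝ))

/-- for fixed `0 < a < 1`, `0 < C < 1`, `t ≥ 1` and `0 < ε' < 1 − P(t)`, if for
each `n` the integer `k n` satisfies
`k n ≥ (10t + n²t − nt + n + log₂(1/ε')) / log₂(1/(1+(C−1)a))`, then the TPE constant
`η(n) = (P(t) + ε')/(1 − a^{k n})^{n−1} + (1 − (1 − a^{k n})^{n−1})/(1 − a^{k n})^{n−1}`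
converges to `P(t) + ε'` as `n → ∞`. -/
theorem eta_tendsto_Pgap_add_eps
    (a C : ℝ) (ha0 : 0 < a) (ha1 : a < 1) (hC0 : 0 < C) (hC1 : C < 1)
    (t : ℕ) (ht : 1 ≤ t) (ε' : ℝ) (hε'0 : 0 < ε') (hε'1 : ε' < 1 - Pgap t)
    (k : ℕ → ℕ)
    (hk : ∀ n : ℕ,
      (10 * t + (n : ℝ) ^ 2 * t - n * t + n + Real.logb 2 (1 / ε')) /
        Real.logb 2 (1 / (1 + (C - 1) * a)) ≤ (k n : ℝ)) :
    Filter.Tendsto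
      (fun n : ℕ =>
        (Pgap t + ε') / (1 - a ^ k n) ^ (n - 1)
          + (1 - (1 - a ^ k n) ^ (n - 1)) / (1 - a ^ k n) ^ (n - 1))
      Filter.atTop (nhds (Pgap t + ε')) := by
  set D := Real.logb 2 (1 / (1 + (C - 1) * a)) with hDdef
  have hbase0 : 0 < 1 + (C - 1) * a := by nlinarith
  have hbase1 : 1 + (C - 1) * a < 1 := by nlinarith
  have hDpos : 0 < D := by
    apply Real.logb_pos one_lt_two
    rw [lt_div_iff₀ hbase0]
    linarith
  have hPpos : 0 < Pgap t := by
    apply Real.rpow_pos_of_pos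
    have h0 : (0:ℝ) ≤ (425 * ((⌊Real.logb 2 (4 * t)⌋ : ℤ) : ℝ) ^ 2 * (t : ℝ) ^ 5 *
        (t : ℝ) ^ ((3.1 : ℝ) / Real.log 2))⁻¹ := by positivity
    linarith
  have hε'lt1 : ε' < 1 := by linarith
  have hL : 0 ≤ Real.logb 2 (1 / ε') := by
    apply Real.logb_nonneg one_lt_two
    rw [le_div_iff₀ hε'0]; linarith
  have ht1 : (1:ℝ) ≤ (t:ℝ) := by exact_mod_cast ht
  -- lower bound on k n
  have hkn : ∀ n : ℕ, ((n:ℝ)^2) / D ≤ k n := by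
    intro n
    refine le_trans ?_ (hk n)
    rw [hDdef] at hDpos ⊢
    gcongr
    have hq : (0:ℝ) ≤ (n:ℝ) * ((n:ℝ) - 1) := by
      rcases Nat.eq_zero_or_pos n with h | h
      · simp [h]
      · have : (1:ℝ) ≤ (n:ℝ) := by exact_mod_cast h
        nlinarith
    nlinarith [mul_nonneg hq (sub_nonneg.2 ht1)]
  set ρ : ℝ := a ^ ((1:ℝ)/D) with hρdef
  have hρ0 : 0 < ρ := Real.rpow_pos_of_pos ha0 _
  have hρ1 : ρ < 1 := Real.rpow_lt_one ha0.le ha1 (by positivity)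
  have hpow : ∀ n : ℕ, a ^ k n ≤ ρ ^ (n^2) := by
    intro n
    have h2 : ρ ^ (n^2) = a ^ (((1:ℝ)/D) * ((n^2 : ℕ) : ℝ)) := by
      rw [Real.rpow_mul ha0.le, Real.rpow_natCast]
    have h3 : ((1:ℝ)/D) * ((n^2 : ℕ) : ℝ) ≤ (k n : ℝ) := by
      have := hkn n
      push_cast
      rw [one_div, inv_mul_eq_div]
      exact this
    calc a ^ k n = a ^ ((k n : ℕ) : ℝ) := (Real.rpow_natCast a (k n)).symm
      _ ≤ a ^ (((1:ℝ)/D) * ((n^2 : ℕ) : ℝ)) :=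
          Real.rpow_le_rpow_of_exponent_ge ha0 ha1.le h3
      _ = ρ ^ (n^2) := h2.symm
  have hak0 : ∀ n : ℕ, 0 ≤ a ^ k n := fun n => pow_nonneg ha0.le _
  have hak1 : ∀ n : ℕ, a ^ k n ≤ 1 := fun n => pow_le_one₀ ha0.le ha1.le
  set f : ℕ → ℝ := fun n => (1 - a ^ k n) ^ (n - 1) with hfdef
  have hf_le_one : ∀ n : ℕ, f n ≤ 1 := by
    intro n
    exact pow_le_one₀ (by linarith [hak1 n]) (by linarith [hak0 n])
  have hf_low : ∀ n : ℕ, 1 ≤ n → 1 - (n:ℝ) * ρ ^ n ≤ f n := by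
    intro n hn
    have hbern : 1 + ((n-1 : ℕ):ℝ) * (-(a ^ k n)) ≤ (1 + (-(a ^ k n))) ^ (n - 1) := by
      apply one_add_mul_le_pow
      have := hak1 n; linarith
    have hρn : a ^ k n ≤ ρ ^ n := by
      refine le_trans (hpow n) ?_
      exact pow_le_pow_of_le_one hρ0.le hρ1.le (Nat.le_self_pow two_ne_zero n)
    have hmul : ((n-1 : ℕ):ℝ) * a ^ k n ≤ (n:ℝ) * ρ ^ n := by
      apply mul_le_mul _ hρn (hak0 n) (Nat.cast_nonneg n)
      exact_mod_cast Nat.sub_le n 1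
    have : 1 - (n:ℝ) * ρ ^ n ≤ 1 + ((n-1 : ℕ):ℝ) * (-(a ^ k n)) := by
      rw [mul_neg]; linarith
    refine le_trans this (le_trans hbern ?_)
    simp [hfdef, sub_eq_add_neg]
  have hf_tendsto : Filter.Tendsto f Filter.atTop (nhds 1) := by
    have hlow : Filter.Tendsto (fun n : ℕ => 1 - (n:ℝ) * ρ ^ n) Filter.atTop (nhds 1) := by
      have h := tendsto_pow_const_mul_const_pow_of_lt_one 1 hρ0.le hρ1
      simp only [pow_one] at h
      simpa using Filter.Tendsto.sub (tendsto_const_nhds : Filter.Tendsto _ _ (nhds (1:ℝ))) h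
    refine tendsto_of_tendsto_of_tendsto_of_le_of_le' hlow tendsto_const_nhds ?_ ?_
    · filter_upwards [Filter.eventually_ge_atTop 1] with n hn using hf_low n hn
    · filter_upwards with n using hf_le_one n
  have hmain : Filter.Tendsto (fun n : ℕ => ((Pgap t + ε') + (1 - f n)) / f n)
      Filter.atTop (nhds (((Pgap t + ε') + (1 - 1)) / 1)) :=
    Filter.Tendsto.div (tendsto_const_nhds.add (tendsto_const_nhds.sub hf_tendsto))
      hf_tendsto one_ne_zero
  simp only [sub_self, add_zero, div_one] at hmain
  simpa only [← add_div] using hmain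

end
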